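/- Let F be a field, n a natural number, and V, W ⊆ F^n linear subspaces. For v ∈ F^n let diag(v) denote the diagonal n×n matrix with diagonal entries v, and set diag(V) = {diag(v) : v ∈ V}. Then there exists an invertible n×n matrix g over F with {g M g⁻¹ : M ∈ diag(V)} = diag(W) if and only if there exists a permutation σ of {1,…,n} with {(v_{σ(1)},…,v_{σ(n)}) : v ∈ V} = W. -/

import Mathlib

/-- For linear subspaces `V, W ⊆ F^n`, the Lie algebras
`diag(V)` and `diag(W)` of diagonal matrices are conjugate by some invertible
matrix iff `V` and `W` are related by a permutation of coordinates. -/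
theorem stmt_1 (F : Type*) [Field F] (n : ℕ) (V W : Submodule F (Fin n → F)) :
    (∃ g : (Matrix (Fin n) (Fin n) F)ˣ,
      (fun M => (g : Matrix (Fin n) (Fin n) F) * M *
          ((g⁻¹ : (Matrix (Fin n) (Fin n) F)ˣ) : Matrix (Fin n) (Fin n) F)) ''
        (Matrix.diagonal '' (V : Set (Fin n → F))) =
      Matrix.diagonal '' (W : Set (Fin n → F)))
    ↔ ∃ σ : Equiv.Perm (Fin n),
        (fun v : Fin n → F => fun i => v (σ i)) '' (V : Set (Fin n → F)) =
          (W : Set (Fin n → F)) := by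
  constructor
  · rintro ⟨g, hg⟩
    have hunit : IsUnit (g : Matrix (Fin n) (Fin n) F).det :=
      (Matrix.isUnit_iff_isUnit_det _).mp g.isUnit
    have hdet : (g : Matrix (Fin n) (Fin n) F).det ≠ 0 := hunit.ne_zero
    have hτ : ∃ τ : Equiv.Perm (Fin n),
        ∀ i, (g : Matrix (Fin n) (Fin n) F) (τ i) i ≠ 0 := by
      by_contra h
      push_neg at h
      apply hdet
      rw [Matrix.det_apply]
      refine Finset.sum_eq_zero fun τ _ => ?_
      obtain ⟨i, hi⟩ := h τ
      rw [show (∏ i, (g : Matrix (Fin n) (Fin n) F) (τ i) i) = 0 from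
        Finset.prod_eq_zero (Finset.mem_univ i) hi, smul_zero]
    obtain ⟨τ, hτ⟩ := hτ
    refine ⟨τ⁻¹, ?_⟩
    have key : ∀ v w : Fin n → F,
        (g : Matrix (Fin n) (Fin n) F) * Matrix.diagonal v *
          ((g⁻¹ : (Matrix (Fin n) (Fin n) F)ˣ) : Matrix (Fin n) (Fin n) F) =
          Matrix.diagonal w → w = fun i => v (τ⁻¹ i) := by
      intro v w heq
      have h1 : (g : Matrix (Fin n) (Fin n) F) * Matrix.diagonal v =
          Matrix.diagonal w * (g : Matrix (Fin n) (Fin n) F) := by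
        have := congrArg (· * (g : Matrix (Fin n) (Fin n) F)) heq
        simpa [mul_assoc, Matrix.nonsing_inv_mul _ hunit, mul_one] using this
      funext i
      have h2 := congrFun (congrFun h1 i) (τ⁻¹ i)
      rw [Matrix.mul_diagonal, Matrix.diagonal_mul] at h2
      have hne : (g : Matrix (Fin n) (Fin n) F) i (τ⁻¹ i) ≠ 0 := by
        have := hτ (τ⁻¹ i)
        rwa [← Equiv.Perm.mul_apply, mul_inv_cancel, Equiv.Perm.one_apply] at this
      exact (mul_left_cancel₀ hne (h2.trans (mul_comm _ _))).symm
    ext w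
    constructor
    · rintro ⟨v, hv, rfl⟩
      have hmem : (fun M => (g : Matrix (Fin n) (Fin n) F) * M *
          ((g⁻¹ : (Matrix (Fin n) (Fin n) F)ˣ) : Matrix (Fin n) (Fin n) F))
          (Matrix.diagonal v) ∈ Matrix.diagonal '' (W : Set (Fin n → F)) := by
        rw [← hg]
        exact Set.mem_image_of_mem _ (Set.mem_image_of_mem _ hv)
      obtain ⟨w', hw', heq⟩ := hmem
      have hkey := key v w' heq.symm
      show (fun i => v (τ⁻¹ i)) ∈ (W : Set (Fin n → F))
      rw [← hkey]
      exact hw'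
    · intro hw
      have hmem : Matrix.diagonal w ∈
          (fun M => (g : Matrix (Fin n) (Fin n) F) * M *
            ((g⁻¹ : (Matrix (Fin n) (Fin n) F)ˣ) : Matrix (Fin n) (Fin n) F)) ''
          (Matrix.diagonal '' (V : Set (Fin n → F))) := by
        rw [hg]
        exact Set.mem_image_of_mem _ hw
      obtain ⟨M, ⟨v, hv, rfl⟩, heq⟩ := hmem
      exact ⟨v, hv, (key v w heq).symm⟩
  · rintro ⟨σ, hσ⟩
    set P : Matrix (Fin n) (Fin n) F := Matrix.of fun i j => if σ i = j then 1 else 0 with hP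
    set Q : Matrix (Fin n) (Fin n) F := Matrix.of fun i j => if σ j = i then 1 else 0 with hQ
    have hPQ : P * Q = 1 := by
      ext i k
      simp [hP, hQ, Matrix.mul_apply, Matrix.one_apply, ite_and, Finset.sum_ite_eq, eq_comm]
    have hQP : Q * P = 1 := by
      ext i k
      rw [Matrix.mul_apply]
      simp only [hP, hQ, Matrix.of_apply, Equiv.apply_eq_iff_eq_symm_apply, ite_and,
        mul_ite, mul_one, mul_zero, ite_mul, one_mul, zero_mul]
      rw [Finset.sum_ite_eq' Finset.univ (σ.symm k)]
      simp [Matrix.one_apply, Equiv.symm_apply_eq, EmbeddingLike.apply_eq_iff_eq, eq_comm]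
    have hconj : ∀ v : Fin n → F, P * Matrix.diagonal v * Q =
        Matrix.diagonal fun i => v (σ i) := by
      intro v
      ext i k
      simp [hP, hQ, Matrix.mul_apply, Matrix.diagonal_apply, ite_and, Finset.sum_ite_eq]
      split_ifs with h
      · rw [h]
      · rfl
    refine ⟨⟨P, Q, hPQ, hQP⟩, ?_⟩
    rw [← hσ, Set.image_image, Set.image_image]
    exact Set.image_congr fun v _ => hconj v
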